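/- arXiv:0910.5181 — 10 statements merged into one kernel-verified Lean document; each statement's English description precedes it below -/
import Mathlib

section
/- Let $B$ be a nonzero algebra over a commutative ring $k$. The following are equivalent: (i) every surjective algebra homomorphism $f:A_1\times A_2\to B$ from a direct product of two algebras factors through the projection onto $A_1$ or through the projection onto $A_2$; (ii) $B$ is not the sum $B_1+B_2$ of two nonzero mutually annihilating subalgebras (i.e., with $B_1B_2=B_2B_1=\{0\}$); (iii) $Z(B)=\{0\}$ and $B$ is not an internal direct product of two nonzero subalgebras. -/
universe u

/-- Lemma 1.6: for a nonzero algebra `B` over a commutative ring `k`, TFAE: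
(i) every surjective homomorphism `A₁ × A₂ → B` factors through one of the projections;
(ii) `B` is not the sum of two nonzero mutually annihilating subalgebras;
(iii) `Z(B) = {0}` and `B` is not an internal direct product of two nonzero subalgebras. -/
theorem stmt1 {k : Type u} (B : Type u) [CommRing k]
    [NonUnitalNonAssocRing B] [Module k B]
    [SMulCommClass k B B] [IsScalarTower k B B]
    (hB : ∃ b : B, b ≠ 0) :
    List.TFAE
      [ -- (i)
        (∀ (A₁ A₂ : Type u) [NonUnitalNonAssocRing A₁] [NonUnitalNonAssocRing A₂]
            [Module k A₁] [Module k A₂]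
            [SMulCommClass k A₁ A₁] [IsScalarTower k A₁ A₁]
            [SMulCommClass k A₂ A₂] [IsScalarTower k A₂ A₂]
            (f : (A₁ × A₂) →ₙₐ[k] B), Function.Surjective f →
            (∃ g : A₁ →ₙₐ[k] B, ∀ p : A₁ × A₂, f p = g p.1) ∨
            (∃ g : A₂ →ₙₐ[k] B, ∀ p : A₁ × A₂, f p = g p.2)),
        -- (ii)
        ¬ (∃ B₁ B₂ : NonUnitalSubalgebra k B,
            (∃ x ∈ B₁, x ≠ 0) ∧ (∃ x ∈ B₂, x ≠ 0) ∧
            (∀ x ∈ B₁, ∀ y ∈ B₂, x * y = 0 ∧ y * x = 0) ∧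
            (∀ b : B, ∃ x ∈ B₁, ∃ y ∈ B₂, b = x + y)),
        -- (iii)
        ((∀ x : B, (∀ y : B, x * y = 0 ∧ y * x = 0) → x = 0) ∧
          ¬ (∃ B₁ B₂ : NonUnitalSubalgebra k B,
            (∃ x ∈ B₁, x ≠ 0) ∧ (∃ x ∈ B₂, x ≠ 0) ∧
            (∀ x ∈ B₁, ∀ y ∈ B₂, x * y = 0 ∧ y * x = 0) ∧
            (∀ b : B, ∃ x ∈ B₁, ∃ y ∈ B₂, b = x + y) ∧
            (∀ x : B, x ∈ B₁ → x ∈ B₂ → x = 0))) ] := by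
  tfae_have 1 → 2
  · intro h1
    rintro ⟨B₁, B₂, ⟨x₁, hx₁, hx₁0⟩, ⟨x₂, hx₂, hx₂0⟩, hann, hsum⟩
    -- build the addition map `B₁ × B₂ → B`
    let f : (↥B₁ × ↥B₂) →ₙₐ[k] B :=
      { toFun := fun p => (p.1 : B) + (p.2 : B)
        map_add' := by
          rintro ⟨a, b⟩ ⟨a', b'⟩
          simp only [Prod.fst_add, Prod.snd_add]
          push_cast
          abel
        map_smul' := by
          rintro c ⟨a, b⟩
          simp only [Prod.smul_fst, Prod.smul_snd, RingHom.id_apply]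
          push_cast
          simp [smul_add]
        map_zero' := by simp
        map_mul' := by
          rintro ⟨a, b⟩ ⟨a', b'⟩
          have h1 := (hann a a.2 b' b'.2).1
          have h2 := (hann a' a'.2 b b.2).2
          push_cast
          simp only [add_mul, mul_add, h1, h2]
          abel }
    have hfsurj : Function.Surjective f := by
      intro b
      obtain ⟨x, hx, y, hy, rfl⟩ := hsum b
      exact ⟨(⟨x, hx⟩, ⟨y, hy⟩), rfl⟩
    rcases h1 ↥B₁ ↥B₂ f hfsurj with ⟨g, hg⟩ | ⟨g, hg⟩
    · have := hg (0, ⟨x₂, hx₂⟩)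
      simp only [map_zero] at this
      exact hx₂0 (by simpa [f] using this)
    · have := hg (⟨x₁, hx₁⟩, 0)
      simp only [map_zero] at this
      exact hx₁0 (by simpa [f] using this)
  tfae_have 2 → 3
  · intro h2
    constructor
    · intro x hx
      by_contra hx0
      -- B₁ := k•x, B₂ := ⊤
      refine h2 ⟨{ carrier := {y | ∃ c : k, c • x = y}
                   add_mem' := by
                     rintro a b ⟨c, rfl⟩ ⟨d, rfl⟩
                     exact ⟨c + d, add_smul c d x⟩
                   zero_mem' := ⟨0, zero_smul k x⟩
                   mul_mem' := by
                     rintro a b ⟨c, rfl⟩ ⟨d, rfl⟩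
                     refine ⟨0, ?_⟩
                     rw [zero_smul, smul_mul_assoc, (hx (d • x)).1, smul_zero]
                   smul_mem' := by
                     rintro c a ⟨d, rfl⟩
                     exact ⟨c • d, smul_assoc c d x⟩ },
                 ⊤, ⟨x, ⟨1, one_smul k x⟩, hx0⟩, ?_, ?_, ?_⟩
      · obtain ⟨b, hb⟩ := hB
        exact ⟨b, trivial, hb⟩
      · rintro a ⟨c, rfl⟩ y -
        constructor
        · rw [smul_mul_assoc, (hx y).1, smul_zero]
        · rw [mul_smul_comm, (hx y).2, smul_zero]
      · intro b
        exact ⟨0, ⟨0, zero_smul k x⟩, b, trivial, (zero_add b).symm⟩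
    · rintro ⟨B₁, B₂, hne₁, hne₂, hann, hsum, -⟩
      exact h2 ⟨B₁, B₂, hne₁, hne₂, hann, hsum⟩
  tfae_have 3 → 1
  · rintro ⟨hZ, hnd⟩ A₁ A₂ _ _ _ _ _ _ _ _ f hf
    set B₁ := NonUnitalAlgHom.range (f.comp (NonUnitalAlgHom.inl k A₁ A₂)) with hB₁
    set B₂ := NonUnitalAlgHom.range (f.comp (NonUnitalAlgHom.inr k A₁ A₂)) with hB₂
    have key : ∀ (a₁ : A₁) (a₂ : A₂), f (a₁, a₂) = f (a₁, 0) + f (0, a₂) := by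
      intro a₁ a₂
      rw [← map_add]
      norm_num
    have cross1 : ∀ (a₁ : A₁) (a₂ : A₂), f (a₁, 0) * f (0, a₂) = 0 := by
      intro a₁ a₂
      rw [← map_mul]
      have : ((a₁, 0) : A₁ × A₂) * (0, a₂) = 0 := by
        ext <;> simp
      rw [this, map_zero]
    have cross2 : ∀ (a₁ : A₁) (a₂ : A₂), f (0, a₂) * f (a₁, 0) = 0 := by
      intro a₁ a₂
      rw [← map_mul]
      have : ((0, a₂) : A₁ × A₂) * (a₁, 0) = 0 := by
        ext <;> simp
      rw [this, map_zero]
    have hann : ∀ x ∈ B₁, ∀ y ∈ B₂, x * y = 0 ∧ y * x = 0 := by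
      rintro x hx y hy
      obtain ⟨a, rfl⟩ := (NonUnitalAlgHom.mem_range _).1 hx
      obtain ⟨b, rfl⟩ := (NonUnitalAlgHom.mem_range _).1 hy
      exact ⟨cross1 a b, cross2 a b⟩
    have hsum : ∀ b : B, ∃ x ∈ B₁, ∃ y ∈ B₂, b = x + y := by
      intro b
      obtain ⟨⟨a₁, a₂⟩, rfl⟩ := hf b
      exact ⟨f (a₁, 0), ⟨a₁, rfl⟩, f (0, a₂), ⟨a₂, rfl⟩, key a₁ a₂⟩
    have hint : ∀ x : B, x ∈ B₁ → x ∈ B₂ → x = 0 := by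
      intro x hx1 hx2
      apply hZ
      intro y
      obtain ⟨u, hu, v, hv, rfl⟩ := hsum y
      constructor
      · rw [mul_add, (hann x hx1 v hv).1, (hann u hu x hx2).2, add_zero]
      · rw [add_mul, (hann u hu x hx2).1, (hann x hx1 v hv).2, add_zero]
    by_cases hc : ∃ x ∈ B₂, x ≠ 0
    · -- then B₁ must be trivial, factor through A₂
      have hB1triv : ∀ x ∈ B₁, x = 0 := by
        by_contra hcc
        push_neg at hcc
        obtain ⟨x, hx, hx0⟩ := hcc
        exact hnd ⟨B₁, B₂, ⟨x, hx, hx0⟩, hc, hann, hsum, hint⟩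
      refine Or.inr ⟨f.comp (NonUnitalAlgHom.inr k A₁ A₂), ?_⟩
      rintro ⟨a₁, a₂⟩
      have h0 : f (a₁, 0) = 0 := hB1triv _ ⟨a₁, rfl⟩
      show f (a₁, a₂) = f (0, a₂)
      rw [key a₁ a₂, h0, zero_add]
    · push_neg at hc
      refine Or.inl ⟨f.comp (NonUnitalAlgHom.inl k A₁ A₂), ?_⟩
      rintro ⟨a₁, a₂⟩
      have h0 : f (0, a₂) = 0 := hc _ ⟨a₂, rfl⟩
      show f (a₁, a₂) = f (a₁, 0)
      rw [key a₁ a₂, h0, add_zero]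
  tfae_finish
end

section
/- Let $(A_i)_{i\in I}$ be a family of nonempty sets, $B$ a set, and $f:\prod_I A_i\to B$ a map whose image has more than one element. Then $f$ factors, for every subset $J\subseteq I$, through the projection onto $\prod_{i\in J}A_i$ or through the projection onto $\prod_{i\in I-J}A_i$, if and only if there is an ultrafilter $\mathcal{U}$ on $I$ such that $f$ factors through the natural quotient map $\prod_I A_i\to \prod_I A_i/\mathcal{U}$. Moreover, such an ultrafilter $\mathcal{U}$ is uniquely determined by $f$. -/
open Classical in
private lemma stmt4_dep_factors {I B : Type*} (A : I → Type*) [∀ i, Nonempty (A i)]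
    (f : (∀ i, A i) → B) (J : Set I)
    (h : ∀ a a' : ∀ i, A i, (∀ i ∈ J, a i = a' i) → f a = f a') :
    ∃ g : (∀ i : J, A i) → B, ∀ a : ∀ i, A i, f a = g (fun i => a i) := by
  refine ⟨fun b => f (fun i => if hi : i ∈ J then b ⟨i, hi⟩ else Classical.arbitrary (A i)),
    fun a => ?_⟩
  exact h _ _ (fun i hi => by simp [hi])

private lemma stmt4_const {I B : Type*} (A : I → Type*) [∀ i, Nonempty (A i)]
    (f : (∀ i, A i) → B) (J : Set I)
    (h1 : ∀ a a' : ∀ i, A i, (∀ i ∈ J, a i = a' i) → f a = f a')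
    (h2 : ∀ a a' : ∀ i, A i, (∀ i ∈ Jᶜ, a i = a' i) → f a = f a')
    (a a' : ∀ i, A i) : f a = f a' := by
  classical
  set c : ∀ i, A i := fun i => if i ∈ J then a i else a' i with hc
  have e1 : f a = f c := h1 a c (fun i hi => by simp [hc, hi])
  have e2 : f c = f a' := h2 c a' (fun i hi => by have hni : i ∉ J := hi; simp [hc, hni])
  exact e1.trans e2

/-- Lemma 3.1: for `f : ∏ᵢ Aᵢ → B` with image having more than one element,
`f` factors, for every `J ⊆ I`, through the projection onto `∏_{i ∈ J} Aᵢ` or onto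
`∏_{i ∈ I - J} Aᵢ`, if and only if `f` factors through the natural map to an
ultraproduct `∏ᵢ Aᵢ / 𝒰` (i.e. `f` identifies any two elements agreeing on a
`𝒰`-large set); moreover such an ultrafilter `𝒰` is unique. -/
theorem stmt4 {I B : Type*} (A : I → Type*) [∀ i, Nonempty (A i)]
    (f : (∀ i, A i) → B) (hf : ∃ a a' : ∀ i, A i, f a ≠ f a') :
    ((∀ J : Set I,
        (∃ g : (∀ i : J, A i) → B, ∀ a : ∀ i, A i, f a = g (fun i => a i)) ∨
        (∃ g : (∀ i : (Jᶜ : Set I), A i) → B, ∀ a : ∀ i, A i, f a = g (fun i => a i))) ↔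
      (∃ U : Ultrafilter I,
        ∀ a a' : ∀ i, A i, {i | a i = a' i} ∈ U → f a = f a')) ∧
    (∀ U V : Ultrafilter I,
      (∀ a a' : ∀ i, A i, {i | a i = a' i} ∈ U → f a = f a') →
      (∀ a a' : ∀ i, A i, {i | a i = a' i} ∈ V → f a = f a') → U = V) := by
  classical
  obtain ⟨x, x', hxx⟩ := hf
  -- Dep J: f depends only on coordinates in J
  set Dep : Set I → Prop :=
    fun J => ∀ a a' : ∀ i, A i, (∀ i ∈ J, a i = a' i) → f a = f a' with hDep
  have dep_factors : ∀ J : Set I, Dep J →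
      ∃ g : (∀ i : J, A i) → B, ∀ a : ∀ i, A i, f a = g (fun i => a i) :=
    fun J h => stmt4_dep_factors A f J h
  have factors_dep : ∀ J : Set I,
      (∃ g : (∀ i : J, A i) → B, ∀ a : ∀ i, A i, f a = g (fun i => a i)) → Dep J := by
    rintro J ⟨g, hg⟩ a a' hag
    rw [hg a, hg a']
    congr 1
    funext i
    exact hag i i.2
  have not_both : ∀ J : Set I, Dep J → ¬ Dep Jᶜ := by
    intro J h1 h2
    exact hxx (stmt4_const A f J h1 h2 x x')
  have dep_inter : ∀ J K : Set I, Dep J → Dep K → Dep (J ∩ K) := by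
    intro J K hJ hK a a' hag
    set c : ∀ i, A i := fun i => if i ∈ J then a i else a' i with hc
    have e1 : f a = f c := hJ a c (fun i hi => by simp [hc, hi])
    have e2 : f c = f a' := by
      refine hK c a' (fun i hi => ?_)
      by_cases hij : i ∈ J
      · simp [hc, hij, hag i ⟨hij, hi⟩]
      · simp [hc, hij]
    exact e1.trans e2
  have dep_mono : ∀ J K : Set I, J ⊆ K → Dep J → Dep K := by
    intro J K hJK h a a' hag
    exact h a a' (fun i hi => hag i (hJK hi))
  constructor
  · constructor
    · intro hyp
      -- build the ultrafilter
      set F : Filter I :=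
        { sets := {J | Dep J}
          univ_sets := fun a a' hag => by
            have : a = a' := funext fun i => hag i trivial
            rw [this]
          sets_of_superset := fun hJ hJK => dep_mono _ _ hJK hJ
          inter_sets := fun h1 h2 => dep_inter _ _ h1 h2 } with hF
      have memF : ∀ J : Set I, J ∈ F ↔ Dep J := fun J => Iff.rfl
      have compl : ∀ s : Set I, sᶜ ∉ F ↔ s ∈ F := by
        intro s
        rw [memF, memF]
        constructor
        · intro hns
          rcases hyp s with h | h
          · exact factors_dep s h
          · exact absurd (factors_dep _ h) hns
        · intro hs hns
          exact not_both s hs hns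
      refine ⟨Ultrafilter.ofComplNotMemIff F compl, fun a a' hm => ?_⟩
      have : Dep {i | a i = a' i} := hm
      exact this a a' (fun i hi => hi)
    · rintro ⟨U, hU⟩ J
      have key : ∀ K : Set I, K ∈ U → Dep K := by
        intro K hK a a' hag
        exact hU a a' (Filter.mem_of_superset hK (fun i hi => hag i hi))
      rcases U.mem_or_compl_mem J with h | h
      · exact Or.inl (dep_factors J (key J h))
      · exact Or.inr (dep_factors Jᶜ (key Jᶜ h))
  · intro U V hU hV
    have key : ∀ (W : Ultrafilter I),
        (∀ a a' : ∀ i, A i, {i | a i = a' i} ∈ W → f a = f a') →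
        ∀ K : Set I, K ∈ W → Dep K := by
      intro W hW K hK a a' hag
      exact hW a a' (Filter.mem_of_superset hK (fun i hi => hag i hi))
    ext s
    constructor
    · intro hs
      by_contra hns
      exact not_both s (key U hU s hs) (key V hV sᶜ (Ultrafilter.compl_mem_iff_notMem.mpr hns))
    · intro hs
      by_contra hns
      exact not_both s (key V hV s hs) (key U hU sᶜ (Ultrafilter.compl_mem_iff_notMem.mpr hns))
end

section
/- Let $f:\prod_I A_i \to B$ be a set map from a product of nonempty sets, and define $\mathcal{F}=\{J\subseteq I \mid f$ factors through the projection onto $\prod_{i\in J}A_i\}$. Then $\mathcal{F}$ is a filter on $I$; moreover, if the image of $f$ has more than one element, $\mathcal{F}$ is a proper filter. -/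
/-- The family `ℱ` of subsets `J ⊆ I` such that `f : ∏ᵢ Aᵢ → B` factors through the
projection onto `∏_{i ∈ J} Aᵢ` is a filter on `I`; it is proper (does not contain `∅`)
whenever the image of `f` has more than one element. -/
theorem stmt5 {I B : Type*} (A : I → Type*) [∀ i, Nonempty (A i)]
    (f : (∀ i, A i) → B) :
    (∃ F : Filter I, ∀ J : Set I,
        J ∈ F ↔ ∃ g : (∀ i : J, A i) → B, ∀ a : ∀ i, A i, f a = g (fun i => a i)) ∧
    ((∃ a a' : ∀ i, A i, f a ≠ f a') →
      ¬ ∃ g : (∀ i : (∅ : Set I), A i) → B, ∀ a : ∀ i, A i, f a = g (fun i => a i)) := by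
  classical
  -- P J : f depends only on coordinates in J
  set P : Set I → Prop :=
    fun J => ∀ a a' : ∀ i, A i, (∀ i ∈ J, a i = a' i) → f a = f a' with hP
  have hiff : ∀ J : Set I,
      P J ↔ ∃ g : (∀ i : J, A i) → B, ∀ a : ∀ i, A i, f a = g (fun i => a i) := by
    intro J
    constructor
    · intro h
      refine ⟨fun b => f (fun i => if hi : i ∈ J then b ⟨i, hi⟩ else Classical.arbitrary _),
        fun a => ?_⟩
      apply h
      intro i hi
      simp [hi]
    · rintro ⟨g, hg⟩ a a' h
      rw [hg a, hg a']
      congr 1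
      funext i
      exact h i i.2
  constructor
  · refine ⟨⟨{J | P J}, ?_, ?_, ?_⟩, fun J => hiff J⟩
    · intro a a' h
      congr 1
      funext i
      exact h i trivial
    · intro J K hJ hJK a a' h
      exact hJ a a' fun i hi => h i (hJK hi)
    · intro J K hJ hK a a' h
      set a'' : ∀ i, A i := fun i => if i ∈ J then a i else a' i with ha''
      have h1 : f a = f a'' := hJ a a'' fun i hi => by simp [ha'', hi]
      have h2 : f a'' = f a' := by
        apply hK
        intro i hi
        by_cases hij : i ∈ J
        · simpa [ha'', hij] using h i ⟨hij, hi⟩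
        · simp [ha'', hij]
      exact h1.trans h2
  · rintro ⟨a, a', hne⟩ ⟨g, hg⟩
    apply hne
    rw [hg a, hg a']
    congr 1
    funext i
    exact i.2.elim
end

section
/- Let $f:A_1\times A_2\to B$ be a homomorphism of algebras over a commutative ring $k$ satisfying $f(A_1\times A_2)+Z(B)=B$ (in particular, any surjective homomorphism). Then $f(A_1)+Z(B)$ and $f(A_2)+Z(B)$ are ideals of $B$ which sum to $B$ and are each other's two-sided annihilators (i.e., they form an almost direct decomposition of $B$). -/
/-- Lemma 6.3: if `f : A₁ × A₂ → B` is an algebra homomorphism with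
`f(A₁ × A₂) + Z(B) = B`, then `f(A₁) + Z(B)` and `f(A₂) + Z(B)` are ideals of `B`
summing to `B`, and each is the two-sided annihilator of the other
(an almost direct decomposition of `B`). -/
theorem stmt7 {k A₁ A₂ B : Type*} [CommRing k]
    [NonUnitalNonAssocRing A₁] [NonUnitalNonAssocRing A₂] [NonUnitalNonAssocRing B]
    [Module k A₁] [Module k A₂] [Module k B]
    [SMulCommClass k B B] [IsScalarTower k B B]
    (f : (A₁ × A₂) →ₙₐ[k] B)
    (hsur : ∀ b : B, ∃ p : A₁ × A₂, ∃ z : B,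
      (∀ y : B, z * y = 0 ∧ y * z = 0) ∧ b = f p + z) :
    ∀ Z C₁ C₂ : Set B,
      Z = {x : B | ∀ y : B, x * y = 0 ∧ y * x = 0} →
      C₁ = {b : B | ∃ a : A₁, ∃ z ∈ Z, b = f (a, 0) + z} →
      C₂ = {b : B | ∃ a : A₂, ∃ z ∈ Z, b = f (0, a) + z} →
      ((∀ x ∈ C₁, ∀ y : B, x * y ∈ C₁ ∧ y * x ∈ C₁) ∧
       (∀ x ∈ C₁, ∀ y ∈ C₁, x + y ∈ C₁) ∧
       (∀ (c : k), ∀ x ∈ C₁, c • x ∈ C₁) ∧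
       (∀ x ∈ C₂, ∀ y : B, x * y ∈ C₂ ∧ y * x ∈ C₂) ∧
       (∀ x ∈ C₂, ∀ y ∈ C₂, x + y ∈ C₂) ∧
       (∀ (c : k), ∀ x ∈ C₂, c • x ∈ C₂) ∧
       (∀ b : B, ∃ x ∈ C₁, ∃ y ∈ C₂, b = x + y) ∧
       (∀ b : B, b ∈ C₁ ↔ ∀ y ∈ C₂, b * y = 0 ∧ y * b = 0) ∧
       (∀ b : B, b ∈ C₂ ↔ ∀ y ∈ C₁, b * y = 0 ∧ y * b = 0)) := by
  intro Z C₁ C₂ hZ hC₁ hC₂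
  have hZmem : ∀ z : B, z ∈ Z ↔ ∀ y : B, z * y = 0 ∧ y * z = 0 := by
    intro z; rw [hZ]; exact Iff.rfl
  have hC₁mem : ∀ b : B, b ∈ C₁ ↔ ∃ a : A₁, ∃ z : B,
      (∀ y : B, z * y = 0 ∧ y * z = 0) ∧ b = f (a, 0) + z := by
    intro b; rw [hC₁]
    constructor
    · rintro ⟨a, z, hz, rfl⟩; exact ⟨a, z, (hZmem z).1 hz, rfl⟩
    · rintro ⟨a, z, hz, rfl⟩; exact ⟨a, z, (hZmem z).2 hz, rfl⟩
  have hC₂mem : ∀ b : B, b ∈ C₂ ↔ ∃ a : A₂, ∃ z : B,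
      (∀ y : B, z * y = 0 ∧ y * z = 0) ∧ b = f (0, a) + z := by
    intro b; rw [hC₂]
    constructor
    · rintro ⟨a, z, hz, rfl⟩; exact ⟨a, z, (hZmem z).1 hz, rfl⟩
    · rintro ⟨a, z, hz, rfl⟩; exact ⟨a, z, (hZmem z).2 hz, rfl⟩
  have hz0 : ∀ y : B, (0 : B) * y = 0 ∧ y * 0 = 0 := fun y => ⟨zero_mul y, mul_zero y⟩
  have hprodmul : ∀ p q : A₁ × A₂, f p * f q = f (p.1 * q.1, p.2 * q.2) := by
    intro p q; rw [← map_mul]; rfl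
  have hsplit : ∀ p : A₁ × A₂, f p = f (p.1, 0) + f (0, p.2) := by
    intro p; rw [← map_add]; congr 1; ext <;> simp
  refine ⟨?_, ?_, ?_, ?_, ?_, ?_, ?_, ?_, ?_⟩
  · -- C₁ ideal (mul)
    intro x hx y
    obtain ⟨a, z, hz, rfl⟩ := (hC₁mem x).1 hx
    obtain ⟨p, w, hw, rfl⟩ := hsur y
    constructor
    · refine (hC₁mem _).2 ⟨a * p.1, 0, hz0, ?_⟩
      rw [add_mul, (hz _).1, add_zero, mul_add, (hw _).2, add_zero, hprodmul]
      simp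
    · refine (hC₁mem _).2 ⟨p.1 * a, 0, hz0, ?_⟩
      rw [mul_add, (hz _).2, add_zero, add_mul, (hw _).1, add_zero, hprodmul]
      simp
  · -- C₁ add
    intro x hx y hy
    obtain ⟨a, z, hz, rfl⟩ := (hC₁mem x).1 hx
    obtain ⟨a', z', hz', rfl⟩ := (hC₁mem y).1 hy
    refine (hC₁mem _).2 ⟨a + a', z + z', fun y => ⟨?_, ?_⟩, ?_⟩
    · rw [add_mul, (hz y).1, (hz' y).1, add_zero]
    · rw [mul_add, (hz y).2, (hz' y).2, add_zero]
    · have h : f (a, 0) + f (a', 0) = f (a + a', 0) := by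
        rw [← map_add]; congr 1; ext <;> simp
      rw [← h]; abel
  · -- C₁ smul
    intro c x hx
    obtain ⟨a, z, hz, rfl⟩ := (hC₁mem x).1 hx
    refine (hC₁mem _).2 ⟨c • a, c • z, fun y => ⟨?_, ?_⟩, ?_⟩
    · rw [smul_mul_assoc, (hz y).1, smul_zero]
    · rw [mul_smul_comm, (hz y).2, smul_zero]
    · rw [smul_add, ← map_smul]; congr 2; ext <;> simp
  · -- C₂ ideal (mul)
    intro x hx y
    obtain ⟨a, z, hz, rfl⟩ := (hC₂mem x).1 hx
    obtain ⟨p, w, hw, rfl⟩ := hsur y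
    constructor
    · refine (hC₂mem _).2 ⟨a * p.2, 0, hz0, ?_⟩
      rw [add_mul, (hz _).1, add_zero, mul_add, (hw _).2, add_zero, hprodmul]
      simp
    · refine (hC₂mem _).2 ⟨p.2 * a, 0, hz0, ?_⟩
      rw [mul_add, (hz _).2, add_zero, add_mul, (hw _).1, add_zero, hprodmul]
      simp
  · -- C₂ add
    intro x hx y hy
    obtain ⟨a, z, hz, rfl⟩ := (hC₂mem x).1 hx
    obtain ⟨a', z', hz', rfl⟩ := (hC₂mem y).1 hy
    refine (hC₂mem _).2 ⟨a + a', z + z', fun y => ⟨?_, ?_⟩, ?_⟩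
    · rw [add_mul, (hz y).1, (hz' y).1, add_zero]
    · rw [mul_add, (hz y).2, (hz' y).2, add_zero]
    · have h : f (0, a) + f (0, a') = f (0, a + a') := by
        rw [← map_add]; congr 1; ext <;> simp
      rw [← h]; abel
  · -- C₂ smul
    intro c x hx
    obtain ⟨a, z, hz, rfl⟩ := (hC₂mem x).1 hx
    refine (hC₂mem _).2 ⟨c • a, c • z, fun y => ⟨?_, ?_⟩, ?_⟩
    · rw [smul_mul_assoc, (hz y).1, smul_zero]
    · rw [mul_smul_comm, (hz y).2, smul_zero]
    · rw [smul_add, ← map_smul]; congr 2; ext <;> simp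
  · -- sum
    intro b
    obtain ⟨p, z, hz, rfl⟩ := hsur b
    refine ⟨f (p.1, 0) + 0, (hC₁mem _).2 ⟨p.1, 0, hz0, rfl⟩,
            f (0, p.2) + z, (hC₂mem _).2 ⟨p.2, z, hz, rfl⟩, ?_⟩
    rw [hsplit p]; abel
  · -- C₁ = Ann C₂
    intro b
    constructor
    · intro hb y hy
      obtain ⟨a, z, hz, rfl⟩ := (hC₁mem b).1 hb
      obtain ⟨a', z', hz', rfl⟩ := (hC₂mem y).1 hy
      constructor
      · rw [add_mul, (hz _).1, add_zero, mul_add, (hz' _).2, add_zero, hprodmul]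
        simp; exact map_zero f
      · rw [add_mul, (hz' _).1, add_zero, mul_add, (hz _).2, add_zero, hprodmul]
        simp; exact map_zero f
    · intro hb
      obtain ⟨p, z, hz, hb'⟩ := hsur b
      subst hb'
      have h2 : ∀ q : A₂, f ((0 : A₁), p.2 * q) = 0 ∧ f ((0 : A₁), q * p.2) = 0 := by
        intro q
        have hmem : f ((0 : A₁), q) + 0 ∈ C₂ := (hC₂mem _).2 ⟨q, 0, hz0, rfl⟩
        obtain ⟨h1, h2⟩ := hb _ hmem
        constructor
        · have hcalc : (f p + z) * (f ((0 : A₁), q) + 0) = f ((0 : A₁), p.2 * q) := by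
            rw [add_zero, add_mul, (hz _).1, add_zero, hprodmul]
            simp
          rw [← hcalc]; exact h1
        · have hcalc : (f ((0 : A₁), q) + 0) * (f p + z) = f ((0 : A₁), q * p.2) := by
            rw [add_zero, mul_add, (hz _).2, add_zero, hprodmul]
            simp
          rw [← hcalc]; exact h2
      have hz' : ∀ y : B, (f ((0 : A₁), p.2) + z) * y = 0 ∧ y * (f ((0 : A₁), p.2) + z) = 0 := by
        intro y
        obtain ⟨q, w, hw, rfl⟩ := hsur y
        constructor
        · rw [add_mul, (hz _).1, add_zero, mul_add, (hw _).2, add_zero, hprodmul]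
          simpa using (h2 q.2).1
        · rw [mul_add, (hz _).2, add_zero, add_mul, (hw _).1, add_zero, hprodmul]
          simpa using (h2 q.2).2
      refine (hC₁mem _).2 ⟨p.1, f ((0 : A₁), p.2) + z, hz', ?_⟩
      rw [hsplit p]; abel
  · -- C₂ = Ann C₁
    intro b
    constructor
    · intro hb y hy
      obtain ⟨a, z, hz, rfl⟩ := (hC₂mem b).1 hb
      obtain ⟨a', z', hz', rfl⟩ := (hC₁mem y).1 hy
      constructor
      · rw [add_mul, (hz _).1, add_zero, mul_add, (hz' _).2, add_zero, hprodmul]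
        simp; exact map_zero f
      · rw [add_mul, (hz' _).1, add_zero, mul_add, (hz _).2, add_zero, hprodmul]
        simp; exact map_zero f
    · intro hb
      obtain ⟨p, z, hz, hb'⟩ := hsur b
      subst hb'
      have h2 : ∀ q : A₁, f (p.1 * q, (0 : A₂)) = 0 ∧ f (q * p.1, (0 : A₂)) = 0 := by
        intro q
        have hmem : f (q, (0 : A₂)) + 0 ∈ C₁ := (hC₁mem _).2 ⟨q, 0, hz0, rfl⟩
        obtain ⟨h1, h2⟩ := hb _ hmem
        constructor
        · have hcalc : (f p + z) * (f (q, (0 : A₂)) + 0) = f (p.1 * q, (0 : A₂)) := by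
            rw [add_zero, add_mul, (hz _).1, add_zero, hprodmul]
            simp
          rw [← hcalc]; exact h1
        · have hcalc : (f (q, (0 : A₂)) + 0) * (f p + z) = f (q * p.1, (0 : A₂)) := by
            rw [add_zero, mul_add, (hz _).2, add_zero, hprodmul]
            simp
          rw [← hcalc]; exact h2
      have hz' : ∀ y : B, (f (p.1, (0 : A₂)) + z) * y = 0 ∧ y * (f (p.1, (0 : A₂)) + z) = 0 := by
        intro y
        obtain ⟨q, w, hw, rfl⟩ := hsur y
        constructor
        · rw [add_mul, (hz _).1, add_zero, mul_add, (hw _).2, add_zero, hprodmul]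
          simpa using (h2 q.1).1
        · rw [mul_add, (hz _).2, add_zero, add_mul, (hw _).1, add_zero, hprodmul]
          simpa using (h2 q.1).2
      refine (hC₂mem _).2 ⟨p.2, f (p.1, (0 : A₂)) + z, hz', ?_⟩
      rw [hsplit p]; abel
end

section
/- For any algebra $A$ over a commutative ring, if $A=B_1+B_2$ is an almost direct decomposition, then $Z(B_1)=Z(B_2)=Z(A)$. -/
private lemma aux8 {k A : Type*} [CommRing k]
    [NonUnitalNonAssocRing A] [Module k A]
    [SMulCommClass k A A] [IsScalarTower k A A]
    (B₁ B₂ : Submodule k A)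
    (hann₁ : ∀ x : A, x ∈ B₁ ↔ ∀ y ∈ B₂, x * y = 0 ∧ y * x = 0)
    (hsum : B₁ ⊔ B₂ = ⊤) :
    {x : A | x ∈ B₁ ∧ ∀ y ∈ B₁, x * y = 0 ∧ y * x = 0} =
      {x : A | ∀ y : A, x * y = 0 ∧ y * x = 0} := by
  ext x
  simp only [Set.mem_setOf_eq]
  constructor
  · rintro ⟨hx, h1⟩ y
    have hy : y ∈ B₁ ⊔ B₂ := by rw [hsum]; trivial
    obtain ⟨a, ha, b, hb, rfl⟩ := Submodule.mem_sup.mp hy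
    have h2 := (hann₁ x).mp hx b hb
    constructor
    · rw [mul_add, (h1 a ha).1, h2.1, add_zero]
    · rw [add_mul, (h1 a ha).2, h2.2, add_zero]
  · intro h
    exact ⟨(hann₁ x).mpr fun y _ => h y, fun y _ => h y⟩

/-- If `A = B₁ + B₂` is an almost direct decomposition (ideals, each the two-sided
annihilator of the other), then `Z(B₁) = Z(B₂) = Z(A)`. -/
theorem stmt8 {k A : Type*} [CommRing k]
    [NonUnitalNonAssocRing A] [Module k A]
    [SMulCommClass k A A] [IsScalarTower k A A]
    (B₁ B₂ : Submodule k A)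
    (hI₁ : ∀ x ∈ B₁, ∀ y : A, x * y ∈ B₁ ∧ y * x ∈ B₁)
    (hI₂ : ∀ x ∈ B₂, ∀ y : A, x * y ∈ B₂ ∧ y * x ∈ B₂)
    (hann₁ : ∀ x : A, x ∈ B₁ ↔ ∀ y ∈ B₂, x * y = 0 ∧ y * x = 0)
    (hann₂ : ∀ x : A, x ∈ B₂ ↔ ∀ y ∈ B₁, x * y = 0 ∧ y * x = 0)
    (hsum : B₁ ⊔ B₂ = ⊤) :
    {x : A | x ∈ B₁ ∧ ∀ y ∈ B₁, x * y = 0 ∧ y * x = 0} =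
      {x : A | ∀ y : A, x * y = 0 ∧ y * x = 0} ∧
    {x : A | x ∈ B₂ ∧ ∀ y ∈ B₂, x * y = 0 ∧ y * x = 0} =
      {x : A | ∀ y : A, x * y = 0 ∧ y * x = 0} := by
  exact ⟨aux8 B₁ B₂ hann₁ hsum, aux8 B₂ B₁ hann₂ (by rw [sup_comm]; exact hsum)⟩
end

section
/- Let $k$ be a field, $f:A\to B$ a homomorphism of $k$-algebras, and $C$ an ideal of $A$. Then there exists a $k$-algebra homomorphism $f_1:A\to B$ with $C\subseteq\ker f_1$ and $(f-f_1)(A)\subseteq Z(B)$ if and only if $f(C)\subseteq Z(B)$ and $f(AA\cap C)=\{0\}$. Moreover, if $B=f(A)+Z(B)$, then the condition $f(C)\subseteq Z(B)$ is implied by $f(AA\cap C)=\{0\}$. -/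
/-- Lemma 6.7: let `k` be a field, `f : A → B` a homomorphism of `k`-algebras, and
`C` an ideal of `A`. Then there is a homomorphism `f₁ : A → B` annihilating `C` with
`f - f₁` valued in `Z(B)` if and only if `f(C) ⊆ Z(B)` and `f(AA ∩ C) = {0}`.
Moreover, if `B = f(A) + Z(B)`, the first condition is implied by the second. -/
theorem stmt9 {k A B : Type*} [Field k]
    [NonUnitalNonAssocRing A] [NonUnitalNonAssocRing B]
    [Module k A] [Module k B]
    [SMulCommClass k A A] [IsScalarTower k A A]
    [SMulCommClass k B B] [IsScalarTower k B B]
    (f : A →ₙₐ[k] B) (C : Submodule k A)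
    (hC : ∀ x ∈ C, ∀ y : A, x * y ∈ C ∧ y * x ∈ C) :
    ∀ Z : Set B, Z = {x : B | ∀ y : B, x * y = 0 ∧ y * x = 0} →
    ∀ AA : Submodule k A, AA = Submodule.span k {z : A | ∃ x y : A, z = x * y} →
      (((∃ f₁ : A →ₙₐ[k] B, (∀ c ∈ C, f₁ c = 0) ∧ ∀ a : A, f a - f₁ a ∈ Z) ↔
          ((∀ c ∈ C, f c ∈ Z) ∧ (∀ a, a ∈ AA → a ∈ C → f a = 0))) ∧
       ((∀ b : B, ∃ a : A, ∃ z ∈ Z, b = f a + z) →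
          (∀ a, a ∈ AA → a ∈ C → f a = 0) → (∀ c ∈ C, f c ∈ Z))) := by
  intro Z hZ AA hAA
  subst hZ hAA
  constructor
  · constructor
    · rintro ⟨f₁, h0, hz1⟩
      have key : ∀ a ∈ Submodule.span k {z : A | ∃ x y : A, z = x * y}, f a = f₁ a := by
        intro a ha
        induction ha using Submodule.span_induction with
        | mem a ha =>
          obtain ⟨x, y, rfl⟩ := ha
          have hzx := hz1 x
          have hzy := hz1 y
          have e1 : f x * f y = f x * f₁ y := by
            have : f x * (f y - f₁ y) = 0 := (hzy (f x)).2
            rw [mul_sub, sub_eq_zero] at this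
            exact this
          have e2 : f x * f₁ y = f₁ x * f₁ y := by
            have : (f x - f₁ x) * f₁ y = 0 := (hzx (f₁ y)).1
            rw [sub_mul, sub_eq_zero] at this
            exact this
          rw [map_mul, map_mul, e1, e2]
        | zero => simp
        | add a b _ _ ha hb => simp [ha, hb]
        | smul c a _ ha => simp [ha]
      constructor
      · intro c hc
        have : f c - f₁ c = f c := by rw [h0 c hc, sub_zero]
        rw [← this]; exact hz1 c
      · intro a hAA hC'
        rw [key a hAA, h0 a hC']
    · rintro ⟨hCZ, hAAC⟩
      set AA := Submodule.span k {z : A | ∃ x y : A, z = x * y} with hAAdef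
      let ZB : Submodule k B :=
        { carrier := {x : B | ∀ y : B, x * y = 0 ∧ y * x = 0}
          add_mem' := by
            intro a b ha hb
            intro y
            constructor
            · rw [add_mul, (ha y).1, (hb y).1, add_zero]
            · rw [mul_add, (ha y).2, (hb y).2, add_zero]
          zero_mem' := by intro y; simp
          smul_mem' := by
            intro c x hx y
            constructor
            · rw [smul_mul_assoc, (hx y).1, smul_zero]
            · rw [mul_smul_comm, (hx y).2, smul_zero] }
      let q : A →ₗ[k] A ⧸ AA := AA.mkQ
      let ι : C →ₗ[k] A ⧸ AA := q ∘ₗ C.subtype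
      let fC : C →ₗ[k] ZB :=
        ((f : A →ₗ[k] B) ∘ₗ C.subtype).codRestrict ZB (fun c => hCZ c c.2)
      have hker : LinearMap.ker ι ≤ LinearMap.ker fC := by
        intro c hc
        have hc' : (c : A) ∈ AA := by
          simpa [ι, q, LinearMap.mem_ker, Submodule.Quotient.mk_eq_zero] using hc
        have : f (c : A) = 0 := hAAC c hc' c.2
        simp [fC, LinearMap.mem_ker]
        ext
        exact this
      let ψ : (C ⧸ LinearMap.ker ι) →ₗ[k] ZB := (LinearMap.ker ι).liftQ fC hker
      let e := LinearMap.quotKerEquivRange ι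
      obtain ⟨h, hh⟩ := (ψ.comp (e.symm : LinearMap.range ι →ₗ[k] C ⧸ LinearMap.ker ι)).exists_extend
      let g : A →ₗ[k] B := ZB.subtype ∘ₗ h ∘ₗ q
      have hgZ : ∀ a : A, ∀ y : B, g a * y = 0 ∧ y * g a = 0 := fun a => (h (q a)).2
      have hgC : ∀ c : A, c ∈ C → g c = f c := by
        intro c hc
        have hqc : q c = ι ⟨c, hc⟩ := rfl
        have hmem : ι ⟨c, hc⟩ ∈ LinearMap.range ι := LinearMap.mem_range_self ι ⟨c, hc⟩
        have : h (ι ⟨c, hc⟩) = (ψ.comp (e.symm : LinearMap.range ι →ₗ[k] C ⧸ LinearMap.ker ι)) ⟨ι ⟨c, hc⟩, hmem⟩ := by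
          have := congrArg (fun m => m ⟨ι ⟨c, hc⟩, hmem⟩) hh
          simpa using this
        have hesymm : (e.symm ⟨ι ⟨c, hc⟩, hmem⟩) = Submodule.Quotient.mk ⟨c, hc⟩ := by
          apply e.injective
          simp [e, LinearMap.quotKerEquivRange_apply_mk]
        have : h (ι ⟨c, hc⟩) = ψ (Submodule.Quotient.mk ⟨c, hc⟩) := by
          rw [this]; simp [hesymm]
        show (ZB.subtype) (h (q c)) = f c
        rw [hqc, this]
        simp [ψ, Submodule.liftQ_apply, fC]; rfl
      have hgAA : ∀ x y : A, g (x * y) = 0 := by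
        intro x y
        have : q (x * y) = 0 := by
          simp [q, Submodule.Quotient.mk_eq_zero]
          exact Submodule.subset_span ⟨x, y, rfl⟩
        show (ZB.subtype) (h (q (x * y))) = 0
        rw [this]; simp
      refine ⟨{ toFun := fun a => f a - g a
                map_add' := by intro a b; simp [map_add]; abel
                map_smul' := by intro c a; simp [map_smul, smul_sub]
                map_zero' := by simp
                map_mul' := ?_ }, ?_, ?_⟩
      · intro x y
        show f (x * y) - g (x * y) = (f x - g x) * (f y - g y)
        rw [hgAA x y, sub_zero, map_mul]
        rw [sub_mul, mul_sub, mul_sub]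
        rw [(hgZ x (f y)).1, (hgZ x (g y)).1, (hgZ y (f x)).2]
        abel
      · intro c hc
        show f c - g c = 0
        rw [hgC c hc, sub_self]
      · intro a
        show f a - (f a - g a) ∈ _
        have : f a - (f a - g a) = g a := by abel
        rw [this]
        exact hgZ a
  · intro hsum hAAC c hc
    intro b
    obtain ⟨a, z, hzZ, rfl⟩ := hsum b
    constructor
    · have h1 : f c * f a = 0 := by
        rw [← map_mul]
        exact hAAC _ (Submodule.subset_span ⟨c, a, rfl⟩) (hC c hc a).1
      rw [mul_add, h1, (hzZ (f c)).2, add_zero]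
    · have h1 : f a * f c = 0 := by
        rw [← map_mul]
        exact hAAC _ (Submodule.subset_span ⟨a, c, rfl⟩) (hC c hc a).2
      rw [add_mul, h1, (hzZ (f c)).1, zero_add]
end

section
/- Let $(A_i)_{i\in I}$ be a family of algebras over a field. Then $\prod_I A_i$ is idempotent (equal to the span of products of its elements) if and only if every $A_i$ is idempotent and there is a natural number $n$ such that all but finitely many $A_i$ have idempotence rank at most $n$. -/
/-- Every element of the span of products is a finite sum of products. -/
lemma aux_sum_prod {k M : Type*} [Field k] [NonUnitalNonAssocRing M] [Module k M]
    [IsScalarTower k M M] {a : M}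
    (ha : a ∈ Submodule.span k {z : M | ∃ x y : M, z = x * y}) :
    ∃ (m : ℕ) (b c : Fin m → M), a = ∑ h, b h * c h := by
  induction ha using Submodule.span_induction with
  | mem z hz => obtain ⟨x, y, rfl⟩ := hz; exact ⟨1, fun _ => x, fun _ => y, by simp⟩
  | zero => exact ⟨0, 0, 0, by simp⟩
  | add x y _ _ hx hy =>
      obtain ⟨m, b, c, rfl⟩ := hx
      obtain ⟨m', b', c', rfl⟩ := hy
      exact ⟨m + m', Fin.append b b', Fin.append c c', by
        simp [Fin.sum_univ_add, Fin.append_left, Fin.append_right]⟩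
  | smul r x _ hx =>
      obtain ⟨m, b, c, rfl⟩ := hx
      exact ⟨m, fun h => r • b h, c, by rw [Finset.smul_sum]; simp [smul_mul_assoc]⟩

/-- Lemma 8.1: a direct product `∏ᵢ Aᵢ` of algebras over a field is idempotent iff
every `Aᵢ` is idempotent and there is `n : ℕ` bounding the idempotence rank of all
but finitely many `Aᵢ` (idempotence rank ≤ n meaning every element is a sum of `n`
products). -/
theorem stmt10 {k I : Type*} [Field k] (A : I → Type*)
    [∀ i, NonUnitalNonAssocRing (A i)] [∀ i, Module k (A i)]
    [∀ i, SMulCommClass k (A i) (A i)] [∀ i, IsScalarTower k (A i) (A i)] :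
    Submodule.span k {z : ∀ i, A i | ∃ x y : ∀ i, A i, z = x * y} = ⊤ ↔
      ((∀ i, Submodule.span k {z : A i | ∃ x y : A i, z = x * y} = ⊤) ∧
        ∃ n : ℕ,
          {i : I | ¬ ∀ a : A i, ∃ b c : Fin n → A i, a = ∑ h, b h * c h}.Finite) := by
  classical
  constructor
  · intro htop
    constructor
    · -- each component is idempotent
      intro i
      rw [eq_top_iff]
      intro a _
      have h1 : Pi.single i a ∈
          Submodule.span k {z : ∀ i, A i | ∃ x y : ∀ i, A i, z = x * y} := by
        rw [htop]; trivial
      obtain ⟨m, b, c, heq⟩ := aux_sum_prod h1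
      have ha : a = ∑ h, b h i * c h i := by
        have := congrFun heq i
        simpa [Finset.sum_apply] using this
      rw [ha]
      exact Submodule.sum_mem _ fun h _ =>
        Submodule.subset_span ⟨b h i, c h i, rfl⟩
    · -- the finiteness condition
      by_contra hn
      push_neg at hn
      set Sn : ℕ → Set I :=
        fun n => {i : I | ∃ a : A i, ∀ b c : Fin n → A i, a ≠ ∑ h, b h * c h} with hSn
      have hinf : ∀ n, (Sn n).Infinite := fun n => hn n
      have hpick : ∀ (n : ℕ) (s : Finset I), ∃ i, i ∈ Sn n ∧ i ∉ s := by
        intro n s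
        obtain ⟨i, hi1, hi2⟩ := (hinf n).exists_notMem_finset s
        exact ⟨i, hi1, hi2⟩
      -- construct a sequence of pairwise distinct indices with f n ∈ Sn n
      obtain ⟨f, hfmem, hfne⟩ :
          ∃ f : ℕ → I, (∀ n, f n ∈ Sn n) ∧ ∀ m n, m < n → f n ≠ f m := by
        let g : ℕ → I × Finset I := fun n =>
          Nat.rec ((hpick 0 ∅).choose, {(hpick 0 ∅).choose})
            (fun n p => ((hpick (n + 1) p.2).choose,
              insert (hpick (n + 1) p.2).choose p.2)) n
        refine ⟨fun n => (g n).1, ?_, ?_⟩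
        · intro n
          cases n with
          | zero => exact (hpick 0 ∅).choose_spec.1
          | succ n => exact (hpick (n + 1) (g n).2).choose_spec.1
        · have hin : ∀ n, (g n).1 ∈ (g n).2 := by
            intro n
            cases n with
            | zero => exact Finset.mem_singleton_self _
            | succ n => exact Finset.mem_insert_self _ _
          have hmono : ∀ m n, m ≤ n → (g m).2 ⊆ (g n).2 := by
            intro m n hmn
            induction n with
            | zero => simp [Nat.le_zero.mp hmn]
            | succ n ih =>
                rcases Nat.lt_or_ge m (n + 1) with h | h
                · exact (ih (Nat.lt_succ_iff.mp h)).trans (Finset.subset_insert _ _)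
                · have : m = n + 1 := le_antisymm hmn h
                  subst this; exact Finset.Subset.refl _
          have hnew : ∀ n, (g (n + 1)).1 ∉ (g n).2 :=
            fun n => (hpick (n + 1) (g n).2).choose_spec.2
          intro m n hmn he
          obtain ⟨n', rfl⟩ : ∃ n', n = n' + 1 := ⟨n - 1, by omega⟩
          have he' : (g (n' + 1)).1 = (g m).1 := he
          refine hnew n' ?_
          rw [he']
          exact hmono m n' (by omega) (hin m)
      -- transport the bad-element witnesses
      have trans : ∀ (i : I) (m : ℕ), f m = i →
          ∃ a : A i, ∀ b c : Fin m → A i, a ≠ ∑ h, b h * c h := by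
        intro i m hm
        subst hm
        exact hfmem m
      -- construct the diagonal element
      obtain ⟨z, hz1⟩ : ∃ z : ∀ i, A i, ∀ n (b c : Fin n → A (f n)),
          z (f n) ≠ ∑ h, b h * c h := by
        refine ⟨fun i => if h : ∃ n, f n = i then
          (trans i (Nat.find h) (Nat.find_spec h)).choose else 0, ?_⟩
        intro n b c heq
        have hex : ∃ m, f m = f n := ⟨n, rfl⟩
        have hfind : Nat.find hex = n := by
          rcases Nat.lt_or_ge (Nat.find hex) n with h | h
          · exact absurd (Nat.find_spec hex).symm (hfne (Nat.find hex) n h)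
          · exact le_antisymm (Nat.find_le rfl) h
        simp only [dif_pos hex] at heq
        have key : ∀ (m : ℕ)
            (pf : ∃ a : A (f n), ∀ b c : Fin m → A (f n), a ≠ ∑ h, b h * c h),
            m = n → pf.choose ≠ ∑ h, b h * c h := by
          rintro m pf rfl
          exact pf.choose_spec b c
        exact key _ _ hfind heq
      -- derive the contradiction
      have hzmem : z ∈
          Submodule.span k {z : ∀ i, A i | ∃ x y : ∀ i, A i, z = x * y} := by
        rw [htop]; trivial
      obtain ⟨m, x, y, hz⟩ := aux_sum_prod hzmem
      refine hz1 m (fun h => x h (f m)) (fun h => y h (f m)) ?_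
      have := congrFun hz (f m)
      simpa [Finset.sum_apply] using this
  · rintro ⟨hidem, n, hfin⟩
    rw [eq_top_iff]
    intro z _
    -- choose representations outside the bad set
    have key : ∀ i, i ∉ {i : I | ¬ ∀ a : A i, ∃ b c : Fin n → A i,
        a = ∑ h, b h * c h} →
        ∃ bc : (Fin n → A i) × (Fin n → A i), z i = ∑ h, bc.1 h * bc.2 h := by
      intro i hi
      obtain ⟨b, c, h⟩ := (not_not.mp hi) (z i)
      exact ⟨(b, c), h⟩
    obtain ⟨b, c, hbc⟩ : ∃ b c : Fin n → ∀ i, A i,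
        ∀ i, i ∉ {i : I | ¬ ∀ a : A i, ∃ b c : Fin n → A i, a = ∑ h, b h * c h} →
          z i = ∑ h, b h i * c h i := by
      refine ⟨fun h i => if hi : i ∈ {i : I | ¬ ∀ a : A i, ∃ b c : Fin n → A i,
          a = ∑ h, b h * c h} then 0 else (key i hi).choose.1 h,
        fun h i => if hi : i ∈ {i : I | ¬ ∀ a : A i, ∃ b c : Fin n → A i,
          a = ∑ h, b h * c h} then 0 else (key i hi).choose.2 h, ?_⟩
      intro i hi
      simp only [dif_neg hi]
      exact (key i hi).choose_spec
    -- the part covered by the uniform bound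
    have hw : (∑ h, b h * c h) ∈
        Submodule.span k {z : ∀ i, A i | ∃ x y : ∀ i, A i, z = x * y} :=
      Submodule.sum_mem _ fun h _ => Submodule.subset_span ⟨b h, c h, rfl⟩
    -- the finitely supported rest
    have hsup : ∀ i, i ∉ {i : I | ¬ ∀ a : A i, ∃ b c : Fin n → A i,
        a = ∑ h, b h * c h} → (z - ∑ h, b h * c h) i = 0 := by
      intro i hi
      have := hbc i hi
      simp [Finset.sum_apply, ← this]
    have hdecomp : z - ∑ h, b h * c h =
        ∑ i ∈ hfin.toFinset, Pi.single i ((z - ∑ h, b h * c h) i) := by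
      funext j
      rw [Finset.sum_apply]
      by_cases hj : j ∈ {i : I | ¬ ∀ a : A i, ∃ b c : Fin n → A i,
          a = ∑ h, b h * c h}
      · rw [Finset.sum_eq_single j]
        · simp
        · intro i _ hij
          exact Pi.single_eq_of_ne' hij _
        · intro hj'
          exact absurd (hfin.mem_toFinset.mpr hj) hj'
      · rw [hsup j hj]
        refine (Finset.sum_eq_zero ?_).symm
        intro i hi
        have hij : i ≠ j := by
          intro h; subst h; exact hj (hfin.mem_toFinset.mp hi)
        exact Pi.single_eq_of_ne' hij _
    have hsingle : ∀ (i : I) (a : A i), Pi.single i a ∈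
        Submodule.span k {z : ∀ i, A i | ∃ x y : ∀ i, A i, z = x * y} := by
      intro i a
      have ha : a ∈ Submodule.span k {z : A i | ∃ x y : A i, z = x * y} := by
        rw [hidem i]; trivial
      obtain ⟨m, b', c', hb'⟩ := aux_sum_prod ha
      have heq : Pi.single i a =
          ∑ h : Fin m, Pi.single i (b' h) * Pi.single i (c' h) := by
        funext j
        rcases eq_or_ne j i with rfl | hne
        · simp [hb', Finset.sum_apply]
        · simp [Finset.sum_apply, Pi.single_eq_of_ne hne]
      rw [heq]
      exact Submodule.sum_mem _ fun h _ =>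
        Submodule.subset_span ⟨Pi.single i (b' h), Pi.single i (c' h), rfl⟩
    have hz : z = (∑ i ∈ hfin.toFinset, Pi.single i ((z - ∑ h, b h * c h) i)) +
        ∑ h, b h * c h := by
      rw [← hdecomp]; abel
    rw [hz]
    exact Submodule.add_mem _
      (Submodule.sum_mem _ fun i _ => hsingle i _) hw
end

section
/- Let $L$ be a Lie algebra over a commutative ring $k$ with $[L,L]=L$, generated as a Lie algebra by a set $X$. Then $L=\sum_{x\in X}[x,L]$, the sum of the $k$-submodules $[x,L]=\{[x,y]\mid y\in L\}$ over $x\in X$ (where each $[x,L]$ is taken as the submodule it spans). -/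
/-- Lemma 9.1(c): if `[L, L] = L` and `L` is generated as a Lie algebra by a set `X`,
then `L = ∑_{x ∈ X} [x, L]`. -/
theorem stmt13 {k L : Type*} [CommRing k] [LieRing L] [LieAlgebra k L]
    (hLL : Submodule.span k {z : L | ∃ x y : L, z = ⁅x, y⁆} = ⊤)
    (X : Set L) (hX : LieSubalgebra.lieSpan k L X = ⊤) :
    (⨆ x ∈ X, Submodule.span k {z : L | ∃ y : L, z = ⁅x, y⁆}) = ⊤ := by
  set M : Submodule k L := ⨆ x ∈ X, Submodule.span k {z : L | ∃ y : L, z = ⁅x, y⁆} with hM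
  -- the set of `a` such that `⁅a, b⁆ ∈ M` for all `b` is a Lie subalgebra
  let K : LieSubalgebra k L :=
    { carrier := {a : L | ∀ b : L, ⁅a, b⁆ ∈ M}
      add_mem' := fun {a₁ a₂} h1 h2 b => by
        rw [add_lie]; exact M.add_mem (h1 b) (h2 b)
      zero_mem' := fun b => by rw [zero_lie]; exact M.zero_mem
      smul_mem' := fun c a h b => by rw [smul_lie]; exact M.smul_mem c (h b)
      lie_mem' := fun {a₁ a₂} h1 h2 b => by
        have : ⁅⁅a₁, a₂⁆, b⁆ = ⁅a₁, ⁅a₂, b⁆⁆ - ⁅a₂, ⁅a₁, b⁆⁆ := by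
          rw [lie_lie]
        rw [this]; exact M.sub_mem (h1 _) (h2 _) }
  have hXK : X ⊆ K := by
    intro x hx b
    have : ⁅x, b⁆ ∈ Submodule.span k {z : L | ∃ y : L, z = ⁅x, y⁆} :=
      Submodule.subset_span ⟨b, rfl⟩
    exact Submodule.mem_iSup_of_mem x (Submodule.mem_iSup_of_mem hx this)
  have hK : ∀ a : L, a ∈ K := fun a => by
    have := (LieSubalgebra.lieSpan_le (K := K)).2 hXK
    rw [hX] at this
    exact this trivial
  rw [eq_top_iff, ← hLL]
  rw [Submodule.span_le]
  rintro z ⟨x, y, rfl⟩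
  exact hK x y
end

section
/- Let $k$ be an infinite field of cardinality $\kappa$, and let $\mathcal{U}$ be an ultrafilter on a set $I$ that is not $\kappa^+$-complete (i.e., not closed under intersections of families of at most $\kappa$ members). Then the ultrapower field $K=k^I/\mathcal{U}$ has uncountable dimension over $k$, and moreover $[K:k]\ge \mathrm{card}(k)$. -/
universe u

open Filter Polynomial

section
variable {k I : Type u} [Field k] (U : Ultrafilter I)

lemma fiber_finset_not_mem {g : I → k} (hg : ∀ c, {i | g i = c} ∉ U) (F : Finset k) :
    {i | g i ∈ F} ∉ U := by
  classical
  induction F using Finset.induction with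
  | empty => simpa using (U : Filter I).empty_not_mem
  | @insert c F hc ih =>
      have : {i | g i ∈ insert c F} = {i | g i = c} ∪ {i | g i ∈ F} := by
        ext i; simp [Finset.mem_insert]
      rw [this, Ultrafilter.union_mem_iff]
      tauto

lemma germ_indep {g : I → k} (hg : ∀ c, {i | g i = c} ∉ U) :
    LinearIndependent k
      (fun c : k => ((fun i => (g i - c)⁻¹ : I → k) : Germ (U : Filter I) k)) := by
  classical
  rw [linearIndependent_iff']
  intro t a hsum c₀ hc₀
  -- convert to eventually statement
  have hcoe : ((fun i => ∑ c ∈ t, a c * (g i - c)⁻¹ : I → k) : Germ (U : Filter I) k) = 0 := by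
    rw [← hsum]
    have : (fun i => ∑ c ∈ t, a c * (g i - c)⁻¹ : I → k)
        = ∑ c ∈ t, a c • (fun i => (g i - c)⁻¹ : I → k) := by
      ext i; simp [Finset.sum_apply]
    rw [this, ← Germ.coe_coeAddHom (l := (U : Filter I)), map_sum]
    exact Finset.sum_congr rfl fun c _ => Germ.coe_smul _ _
  have hev : {i | ∑ c ∈ t, a c * (g i - c)⁻¹ = 0} ∈ U := by
    have h0 : ((fun i => ∑ c ∈ t, a c * (g i - c)⁻¹ : I → k) : Germ (U : Filter I) k)
        = ((0 : I → k) : Germ (U : Filter I) k) := by simpa using hcoe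
    exact Germ.coe_eq.mp h0
  set P : Polynomial k := ∑ c ∈ t, C (a c) * ∏ c' ∈ t.erase c, (X - C c') with hP
  have hPz : P = 0 := by
    by_contra hP0
    set F : Finset k := P.roots.toFinset ∪ t with hF
    have hWne : ({i | ∑ c ∈ t, a c * (g i - c)⁻¹ = 0} ∩ {i | g i ∈ F}ᶜ).Nonempty := by
      refine Filter.nonempty_of_mem (Filter.inter_mem hev ?_)
      exact (Ultrafilter.compl_mem_iff_notMem).mpr (fiber_finset_not_mem U hg F)
    obtain ⟨i, hi1, hi2⟩ := hWne
    set x := g i with hx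
    have hxF : x ∉ F := hi2
    have hxt : x ∉ t := fun h => hxF (Finset.mem_union_right _ h)
    have hxroot : x ∉ P.roots.toFinset := fun h => hxF (Finset.mem_union_left _ h)
    have heval : P.eval x = (∑ c ∈ t, a c * (x - c)⁻¹) * ∏ c ∈ t, (x - c) := by
      rw [hP]
      simp only [eval_finset_sum, eval_mul, eval_C, eval_prod, eval_sub, eval_X,
        Finset.sum_mul]
      refine Finset.sum_congr rfl fun c hc => ?_
      have hxc : x - c ≠ 0 := sub_ne_zero.mpr (fun h => hxt (h ▸ hc))
      rw [mul_assoc]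
      congr 1
      rw [← Finset.mul_prod_erase _ _ hc, ← mul_assoc, inv_mul_cancel₀ hxc, one_mul]
    have : P.eval x = 0 := by rw [heval, hi1, zero_mul]
    exact hxroot (Multiset.mem_toFinset.mpr ((Polynomial.mem_roots hP0).mpr this))
  -- now evaluate P at c₀
  have h1 : P.eval c₀ = a c₀ * ∏ c' ∈ t.erase c₀, (c₀ - c') := by
    rw [hP]
    simp only [eval_finset_sum, eval_mul, eval_C, eval_prod, eval_sub, eval_X]
    refine Finset.sum_eq_single_of_mem c₀ hc₀ fun c hc hne => ?_
    refine mul_eq_zero_of_right _ (Finset.prod_eq_zero (Finset.mem_erase.mpr ⟨hne.symm, hc₀⟩) ?_)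
    simp
  have h2 : ∏ c' ∈ t.erase c₀, (c₀ - c') ≠ 0 := by
    refine Finset.prod_ne_zero_iff.mpr fun c' hc' => sub_ne_zero.mpr ?_
    exact fun h => (Finset.mem_erase.mp hc').1 h.symm
  have := h1
  rw [hPz, eval_zero] at this
  exact (mul_eq_zero.mp this.symm).resolve_right h2

end

section exist
variable {k I : Type u} [Field k] (U : Ultrafilter I)

lemma exists_bad_fn {S : Set (Set I)} (hS : ∀ s ∈ S, s ∈ U)
    (hcard : Cardinal.mk S ≤ Cardinal.mk k) (hn : ⋂₀ S ∉ U) :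
    ∃ g : I → k, ∀ c, {i | g i = c} ∉ U := by
  classical
  have hSne : S.Nonempty := by
    rcases S.eq_empty_or_nonempty with h | h
    · exact absurd (by rw [h]; rw [Set.sInter_empty]; exact Filter.univ_mem : ⋂₀ S ∈ U) hn
    · exact h
  obtain ⟨e⟩ := (Cardinal.le_def _ _).mp hcard
  set wf : WellFounded (WellOrderingRel : ↥S → ↥S → Prop) := IsWellFounded.wf
  obtain ⟨s₀, hs₀⟩ := hSne
  have hne : ∀ i : I, (∃ s : ↥S, i ∉ (s : Set I)) → {s : ↥S | i ∉ (s : Set I)}.Nonempty :=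
    fun i h => h
  set g : I → k := fun i => if h : ∃ s : ↥S, i ∉ (s : Set I) then
      e (wf.min {s : ↥S | i ∉ (s : Set I)} (hne i h)) else e ⟨s₀, hs₀⟩ with hgdef
  refine ⟨g, fun c => ?_⟩
  by_cases hre : ∃ s : ↥S, e s = c
  · obtain ⟨s, hes⟩ := hre
    have hsub : {i | g i = c} ⊆ ((s : Set I))ᶜ ∪ ⋂₀ S := by
      intro i hi
      simp only [Set.mem_setOf_eq, hgdef] at hi
      by_cases h : ∃ s : ↥S, i ∉ (s : Set I)
      · rw [dif_pos h] at hi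
        have heq := e.injective (hi.trans hes.symm)
        left
        have hmem := wf.min_mem {s : ↥S | i ∉ (s : Set I)} (hne i h)
        rw [heq] at hmem
        exact hmem
      · right
        push_neg at h
        exact fun t ht => h ⟨t, ht⟩
    intro hmem
    have : ((s : Set I))ᶜ ∪ ⋂₀ S ∈ U := Filter.mem_of_superset hmem hsub
    rcases (Ultrafilter.union_mem_iff).mp this with h | h
    · exact (Ultrafilter.compl_mem_iff_notMem.mp h) (hS _ s.2)
    · exact hn h
  · have hemp : {i | g i = c} = ∅ := by
      ext i
      simp only [Set.mem_setOf_eq, Set.mem_empty_iff_false, iff_false, hgdef]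
      by_cases h : ∃ s : ↥S, i ∉ (s : Set I)
      · rw [dif_pos h]; exact fun hc => hre ⟨_, hc⟩
      · rw [dif_neg h]; exact fun hc => hre ⟨_, hc⟩
    rw [hemp]
    simpa using (U : Filter I).empty_not_mem

end exist

section card
variable {k I : Type u} [Field k] [Infinite k] (U : Ultrafilter I)

lemma big_card {f : ℕ → Set I} (hf : ∀ n, f n ∈ U) (hn : (⋂ n, f n) ∉ U) :
    Cardinal.aleph0 < Cardinal.mk (Germ (U : Filter I) k) := by
  classical
  set Iset : ℕ → Set I := fun n => ⋂ m ∈ Finset.range n, f m with hIset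
  have hIU : ∀ n, Iset n ∈ U := fun n =>
    (Filter.biInter_mem (Finset.range n).finite_toSet).mpr fun m _ => hf m
  have hIanti : ∀ {m n : ℕ}, m ≤ n → Iset n ⊆ Iset m := by
    intro m n hmn i hi
    simp only [hIset, Set.mem_iInter] at hi ⊢
    exact fun p hp => hi p (Finset.mem_range.mpr (lt_of_lt_of_le (Finset.mem_range.mp hp) hmn))
  have hIinter : (⋂ n, Iset n) = ⋂ n, f n := by
    ext i
    simp only [Set.mem_iInter, hIset]
    constructor
    · exact fun h m => h (m + 1) m (Finset.mem_range.mpr (Nat.lt_succ_self m))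
    · exact fun h n m _ => h m
  set N : I → ℕ := fun i => sInf {n | i ∉ Iset n} with hN
  set e' : ℕ ↪ k := Infinite.natEmbedding k with he'
  set code : (ℕ → Bool) → I → k := fun x i =>
    e' (Encodable.encode (List.ofFn (fun m : Fin (N i) => x m))) with hcode
  have hinj : Function.Injective
      (fun x : ℕ → Bool => ((code x : I → k) : Germ (U : Filter I) k)) := by
    intro x y hxy
    by_contra hne
    obtain ⟨m, hm⟩ := Function.ne_iff.mp hne
    have hmemU : {i | code x i = code y i} ∈ U :=
      Filter.eventually_iff.mp (Germ.coe_eq.mp hxy)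
    have hsub : {i | code x i = code y i} ⊆ (Iset (m + 1))ᶜ ∪ ⋂ n, f n := by
      intro i hi
      by_contra hcon
      rw [Set.mem_union, not_or] at hcon
      obtain ⟨h1, h2⟩ := hcon
      rw [Set.notMem_compl_iff] at h1
      rw [← hIinter] at h2
      have hex : {n | i ∉ Iset n}.Nonempty := by
        simpa [Set.mem_iInter, Set.Nonempty] using h2
      have hNmem : i ∉ Iset (N i) := Nat.sInf_mem hex
      have hmN : m < N i := by
        by_contra hle
        push_neg at hle
        exact hNmem (hIanti (le_trans hle (Nat.le_succ m)) h1)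
      have := e'.injective hi
      have := Encodable.encode_injective this
      have hfn := List.ofFn_inj.mp this
      have := congrFun hfn ⟨m, hmN⟩
      exact hm this
    have : (Iset (m + 1))ᶜ ∪ ⋂ n, f n ∈ U := Filter.mem_of_superset hmemU hsub
    rcases Ultrafilter.union_mem_iff.mp this with h | h
    · exact (Ultrafilter.compl_notMem_iff.mpr (hIU (m + 1))) h
    · exact hn h
  by_contra hle
  push_neg at hle
  haveI : Countable (Germ (U : Filter I) k) := Cardinal.mk_le_aleph0_iff.mp hle
  haveI : Countable (ℕ → Bool) := Function.Injective.countable hinj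
  have hb : Cardinal.mk (ℕ → Bool) ≤ Cardinal.aleph0 := Cardinal.mk_le_aleph0_iff.mpr this
  have hb2 : Cardinal.mk (ℕ → Bool) = (2 : Cardinal) ^ Cardinal.aleph0 := by
    rw [← Cardinal.mk_bool, ← Cardinal.mk_nat, Cardinal.power_def]
  rw [hb2] at hb
  exact absurd hb (not_le.mpr (Cardinal.cantor _))

end card

/-- Theorem B.2 (bigger): if `k` is an infinite field of cardinality `κ` and `𝒰` is an
ultrafilter on `I` that is not `κ⁺`-complete (not closed under intersections of
families of at most `κ` of its members), then the ultrapower field `K = k^I/𝒰`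
has uncountable dimension over `k`, and `[K : k] ≥ card k`. -/
theorem stmt15 {k I : Type u} [Field k] [Infinite k] (U : Ultrafilter I)
    (hU : ¬ ∀ S : Set (Set I), (∀ s ∈ S, s ∈ U) → Cardinal.mk S ≤ Cardinal.mk k →
      ⋂₀ S ∈ U) :
    Cardinal.aleph0 < Module.rank k (Filter.Germ (U : Filter I) k) ∧
    Cardinal.mk k ≤ Module.rank k (Filter.Germ (U : Filter I) k) := by
  push_neg at hU
  obtain ⟨S, h1, h2, h3⟩ := hU
  obtain ⟨g, hg⟩ := exists_bad_fn U h1 h2 h3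
  have hrank : Cardinal.mk k ≤ Module.rank k (Germ (U : Filter I) k) :=
    (germ_indep U hg).cardinal_le_rank
  refine ⟨?_, hrank⟩
  rcases lt_or_ge Cardinal.aleph0 (Cardinal.mk k) with hlt | hle
  · exact lt_of_lt_of_le hlt hrank
  · haveI hck : Countable k := Cardinal.mk_le_aleph0_iff.mp hle
    haveI : Countable ↥S := Cardinal.mk_le_aleph0_iff.mp (h2.trans hle)
    have hSne : S.Nonempty := by
      rcases S.eq_empty_or_nonempty with h | h
      · exact absurd (by rw [h, Set.sInter_empty]; exact Filter.univ_mem : ⋂₀ S ∈ U) h3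
      · exact h
    haveI : Nonempty ↥S := hSne.to_subtype
    obtain ⟨f', hf'⟩ := exists_surjective_nat ↥S
    have hfU : ∀ n, ((f' n : Set I)) ∈ U := fun n => h1 _ (f' n).2
    have hint : (⋂ n, ((f' n : Set I))) = ⋂₀ S := by
      ext i
      simp only [Set.mem_iInter, Set.mem_sInter]
      constructor
      · intro h s hs
        obtain ⟨n, hn⟩ := hf' ⟨s, hs⟩
        have := h n
        rw [hn] at this
        exact this
      · exact fun h n => h _ (f' n).2
    have hbig : Cardinal.aleph0 < Cardinal.mk (Germ (U : Filter I) k) :=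
      big_card (k := k) U hfU (hint ▸ h3)
    by_contra hr
    push_neg at hr
    have hBcard : Cardinal.mk (Module.Basis.ofVectorSpaceIndex k (Germ (U : Filter I) k))
        = Module.rank k (Germ (U : Filter I) k) :=
      (Module.Basis.ofVectorSpace k (Germ (U : Filter I) k)).mk_eq_rank''
    haveI : Countable (Module.Basis.ofVectorSpaceIndex k (Germ (U : Filter I) k)) :=
      Cardinal.mk_le_aleph0_iff.mp (hBcard ▸ hr)
    have hcg : Countable (Germ (U : Filter I) k) :=
      Countable.of_equiv _ (Module.Basis.ofVectorSpace k (Germ (U : Filter I) k)).repr.toEquiv.symm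
    exact absurd (Cardinal.mk_le_aleph0_iff.mpr hcg) (not_le.mpr hbig)
end

section
/- For any field $k$ and positive integer $i$, let $A$ be the $k$-algebra with underlying vector space $M_i(k)$ and multiplication $a*b = a\,e_{11}\,b$ (ordinary matrix products, where $e_{11}$ is the matrix unit). Then $A$ is an associative idempotent algebra whose idempotence rank equals $i$: every matrix is a sum of $i$ products $a*b$, and the identity matrix is not a sum of fewer than $i$ such products. -/
open Matrix

lemma myrank_add {k : Type*} [Field k] {n : Type*} [Fintype n] [DecidableEq n]
    (A B : Matrix n n k) : (A + B).rank ≤ A.rank + B.rank := by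
  simp only [Matrix.rank]
  have h : LinearMap.range (A + B).mulVecLin ≤
      LinearMap.range A.mulVecLin ⊔ LinearMap.range B.mulVecLin := by
    rw [Matrix.mulVecLin_add]
    rintro x ⟨v, rfl⟩
    exact Submodule.add_mem_sup ⟨v, rfl⟩ ⟨v, rfl⟩
  exact (Submodule.finrank_mono h).trans
    (Submodule.finrank_add_le_finrank_add_finrank _ _)

lemma myrank_sum {k : Type*} [Field k] {n : Type*} [Fintype n] [DecidableEq n]
    {m : ℕ} (C : Fin m → Matrix n n k) :
    (∑ h, C h).rank ≤ ∑ h, (C h).rank := by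
  classical
  induction m with
  | zero => simp [Matrix.rank]
  | succ m ih =>
    rw [Fin.sum_univ_succ, Fin.sum_univ_succ]
    exact (myrank_add _ _).trans (add_le_add le_rfl (ih _))

/-- Lemma 12.1: for a field `k` and `i > 0`, the algebra on `Mᵢ(k)` with
multiplication `a * b := a e₁₁ b` is associative and idempotent with idempotence
rank exactly `i`: every matrix is a sum of `i` such products, but the identity
matrix is not a sum of fewer than `i` of them. -/
theorem stmt19 {k : Type*} [Field k] (i : ℕ) (hi : 0 < i) :
    ∀ E : Matrix (Fin i) (Fin i) k, E = Matrix.single ⟨0, hi⟩ ⟨0, hi⟩ 1 →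
      ((∀ a b c : Matrix (Fin i) (Fin i) k,
          (a * E * b) * E * c = a * E * (b * E * c)) ∧
       (∀ c : Matrix (Fin i) (Fin i) k, ∃ a b : Fin i → Matrix (Fin i) (Fin i) k,
          c = ∑ h, a h * E * b h) ∧
       ¬ ∃ m : ℕ, m < i ∧ ∃ a b : Fin m → Matrix (Fin i) (Fin i) k,
          (1 : Matrix (Fin i) (Fin i) k) = ∑ h, a h * E * b h) := by
  intro E hE
  refine ⟨fun a b c => by noncomm_ring, ?_, ?_⟩
  · intro c
    refine ⟨fun h => c * Matrix.single h ⟨0, hi⟩ 1,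
            fun h => Matrix.single ⟨0, hi⟩ h 1, ?_⟩
    have : ∀ h : Fin i,
        c * Matrix.single h ⟨0, hi⟩ 1 * E * Matrix.single ⟨0, hi⟩ h 1
          = c * Matrix.single h h 1 := by
      intro h
      rw [hE, mul_assoc, mul_assoc, Matrix.single_mul_single_same,
        Matrix.single_mul_single_same, one_mul, one_mul]
    simp only [this]
    rw [← Finset.mul_sum]
    have hone : (∑ h : Fin i, Matrix.single h h (1 : k)) = 1 := by
      ext p q
      simp only [Finset.sum_apply, Matrix.sum_apply, Matrix.single, Matrix.one_apply,
        Matrix.of_apply]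
      by_cases hpq : p = q
      · subst hpq
        rw [Finset.sum_eq_single p] <;> simp +contextual [eq_comm]
      · refine (Finset.sum_eq_zero ?_).trans (by simp [hpq])
        intro x _
        by_cases h1 : p = x <;> by_cases h2 : q = x <;>
          simp_all [eq_comm]
    rw [hone, mul_one]
  · rintro ⟨m, hm, a, b, hsum⟩
    have hErank : E.rank ≤ 1 := by
      have : E = (Matrix.of fun (p : Fin i) (_ : Fin 1) =>
            if p = ⟨0, hi⟩ then (1 : k) else 0) *
          (Matrix.of fun (_ : Fin 1) (q : Fin i) =>
            if q = ⟨0, hi⟩ then (1 : k) else 0) := by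
        rw [hE]; ext p q
        simp only [Matrix.mul_apply, Matrix.single, Matrix.of_apply, Fin.sum_univ_one]
        by_cases h1 : p = ⟨0, hi⟩ <;> by_cases h2 : q = ⟨0, hi⟩ <;> simp [h1, h2, ite_and, eq_comm]
      rw [this]
      exact (Matrix.rank_mul_le_left _ _).trans
        ((Matrix.rank_le_card_width _).trans (by simp))
    have hterm : ∀ h : Fin m, (a h * E * b h).rank ≤ 1 := fun h =>
      ((Matrix.rank_mul_le_left _ _).trans
        ((Matrix.rank_mul_le_right _ _).trans hErank))
    have : (1 : Matrix (Fin i) (Fin i) k).rank ≤ m := by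
      rw [hsum]
      refine (myrank_sum _).trans ?_
      calc ∑ h, (a h * E * b h).rank ≤ ∑ _h : Fin m, 1 :=
            Finset.sum_le_sum fun h _ => hterm h
        _ = m := by simp
    rw [Matrix.rank_one] at this
    simp only [Fintype.card_fin] at this
    omega
end
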